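/- arXiv:0804.4503 — 3 statements merged into one kernel-verified Lean document; each statement's English description precedes it below -/
import Mathlib

section
/- Let n ≥ 1 and let A, B : ({−1,1}^n → ℝ) satisfy A(−σ) = A(σ) and B(−σ) = −B(σ) for all σ. Let μ be the probability measure on pairs (σ, ε) ∈ {−1,1}^n × {−1,1} with weights proportional to exp(A(σ) + ε·B(σ)), and let ν be the probability measure on {−1,1}^n with weights proportional to exp(A(σ) + B(σ)). Then for every m ≥ 0 and every g : {−1,1}^n → ℝ with g(−σ) = (−1)^m g(σ) for all σ, the μ-expectation of g(σ)·ε^m equals the ν-expectation of g. -/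
open scoped BigOperators

/-- The set of spin values `{-1, 1}` as a finite subset of `ℝ`. -/
noncomputable abbrev SpinVal : Finset ℝ := {-1, 1}

/-- Spin configurations on `n` sites: maps `Fin n → ℝ` taking values in `{-1,1}`. -/
abbrev Conf (n : ℕ) := Fin n → SpinVal

/-- The globally flipped configuration `-σ`. -/
def negConf {n : ℕ} (σ : Conf n) : Conf n := fun i =>
  ⟨-(σ i : ℝ), by
    have h := (σ i).2
    simp only [SpinVal, Finset.mem_insert, Finset.mem_singleton] at h ⊢
    rcases h with h | h <;> simp [h]⟩

lemma negConf_invol {n : ℕ} : Function.Involutive (negConf (n := n)) := by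
  intro σ; funext i; apply Subtype.ext; simp [negConf]

lemma sum_spinval (f : ℝ → ℝ) : ∑ ε : SpinVal, f ε = f (-1) + f 1 := by
  rw [Finset.sum_coe_sort SpinVal f]
  rw [show SpinVal = {-1, 1} from rfl, Finset.sum_pair (by norm_num)]

lemma flip_sum {n : ℕ} (F : Conf n → ℝ) :
    ∑ σ : Conf n, F (negConf σ) = ∑ σ : Conf n, F σ :=
  Fintype.sum_bijective negConf negConf_invol.bijective _ _ (fun _ => rfl)

/-- **Filling mechanism at fixed disorder.** Let `A` be even and `B` odd under the
global spin flip.  Let `μ` be the probability measure on pairs `(σ, ε)` with weights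
proportional to `exp(A(σ) + ε·B(σ))` and let `ν` be the probability measure on
configurations with weights proportional to `exp(A(σ) + B(σ))`.  Then for every `m`
and every `g` with parity `(-1)^m` under the flip, the `μ`-expectation of
`g(σ)·ε^m` equals the `ν`-expectation of `g`. -/
theorem filling_identity (n : ℕ) (hn : 1 ≤ n) (A B : Conf n → ℝ)
    (hA : ∀ σ, A (negConf σ) = A σ) (hB : ∀ σ, B (negConf σ) = - B σ)
    (m : ℕ) (g : Conf n → ℝ) (hg : ∀ σ, g (negConf σ) = (-1 : ℝ) ^ m * g σ) :
    (∑ σ : Conf n, ∑ ε : SpinVal, g σ * (ε : ℝ) ^ m * Real.exp (A σ + (ε : ℝ) * B σ)) /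
        (∑ σ : Conf n, ∑ ε : SpinVal, Real.exp (A σ + (ε : ℝ) * B σ))
      = (∑ σ : Conf n, g σ * Real.exp (A σ + B σ)) /
          (∑ σ : Conf n, Real.exp (A σ + B σ)) := by
  -- reflect the ε = -1 part onto σ → -σ
  have key : ∀ h : Conf n → ℝ, (∀ σ, h (negConf σ) = (-1:ℝ)^m * h σ) →
      ∑ σ : Conf n, h σ * (-1:ℝ)^m * Real.exp (A σ + (-1) * B σ)
        = ∑ σ : Conf n, h σ * Real.exp (A σ + B σ) := by
    intro h hh
    rw [← flip_sum (fun σ => h σ * Real.exp (A σ + B σ))]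
    refine Finset.sum_congr rfl fun σ _ => ?_
    rw [hh, hA, hB]
    ring_nf
  have num : (∑ σ : Conf n, ∑ ε : SpinVal, g σ * (ε : ℝ) ^ m * Real.exp (A σ + (ε : ℝ) * B σ))
      = 2 * ∑ σ : Conf n, g σ * Real.exp (A σ + B σ) := by
    have : ∀ σ : Conf n, ∑ ε : SpinVal, g σ * (ε : ℝ) ^ m * Real.exp (A σ + (ε : ℝ) * B σ)
        = g σ * (-1:ℝ)^m * Real.exp (A σ + (-1) * B σ) + g σ * Real.exp (A σ + B σ) := by
      intro σ
      rw [sum_spinval (fun x => g σ * x ^ m * Real.exp (A σ + x * B σ))]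
      norm_num
    rw [Finset.sum_congr rfl fun σ _ => this σ, Finset.sum_add_distrib, key g hg]
    ring
  have den : (∑ σ : Conf n, ∑ ε : SpinVal, Real.exp (A σ + (ε : ℝ) * B σ))
      = 2 * ∑ σ : Conf n, Real.exp (A σ + B σ) := by
    have : ∀ σ : Conf n, ∑ ε : SpinVal, Real.exp (A σ + (ε : ℝ) * B σ)
        = Real.exp (A σ + (-1) * B σ) + Real.exp (A σ + B σ) := by
      intro σ
      rw [sum_spinval (fun x => Real.exp (A σ + x * B σ))]
      norm_num
    rw [Finset.sum_congr rfl fun σ _ => this σ, Finset.sum_add_distrib]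
    have e : ∑ σ : Conf n, Real.exp (A σ + (-1) * B σ) = ∑ σ : Conf n, Real.exp (A σ + B σ) := by
      rw [← flip_sum (fun σ => Real.exp (A σ + B σ))]
      exact Finset.sum_congr rfl fun σ _ => by rw [hA, hB]; ring_nf
    rw [e]; ring
  rw [num, den, mul_div_mul_left _ _ (by norm_num)]
end

section
/- Fix N ≥ 1, α̃ > 0, β ≥ 0 and set θ = tanh β. For every t ∈ (0,1), the cavity function t ↦ Ψ_N(α̃, β; t) is differentiable and ∂Ψ_N/∂t = 2α̃·ln cosh β + 2α̃ · E_t[ (1/N) Σ_{i₀∈Fin N} ln(1 + θ·ω_t(σ_{i₀})) ]. -/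
open scoped BigOperators

/-- Hamiltonian of the diluted ferromagnet for the disorder realization `(k, b)`:
`H(σ) = -Σ_{ν<k} σ_{(bν).1} σ_{(bν).2}`. -/
noncomputable def Hdil {n k : ℕ} (b : Fin k → Fin n × Fin n) (σ : Conf n) : ℝ :=
  - ∑ ν : Fin k, (σ (b ν).1 : ℝ) * (σ (b ν).2 : ℝ)

/-- Partition function of the diluted ferromagnet at inverse temperature `β`. -/
noncomputable def Zdil (n : ℕ) (β : ℝ) {k : ℕ} (b : Fin k → Fin n × Fin n) : ℝ :=
  ∑ σ : Conf n, Real.exp (-β * Hdil b σ)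

/-- Gibbs expectation `ω` of an observable for a fixed disorder realization. -/
noncomputable def gibbs (n : ℕ) (β : ℝ) {k : ℕ} (b : Fin k → Fin n × Fin n)
    (f : Conf n → ℝ) : ℝ :=
  (∑ σ : Conf n, f σ * Real.exp (-β * Hdil b σ)) / Zdil n β b

/-- The Poisson probability mass function with mean `lam`. -/
noncomputable def poissonPMF (lam : ℝ) (k : ℕ) : ℝ :=
  Real.exp (-lam) * lam ^ k / (Nat.factorial k : ℝ)

/-- Quenched expectation at connectivity `α` on `n` sites: the number of bonds `k` is
Poisson(αn) and the `2k` endpoints are i.i.d. uniform on the `n` sites. -/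
noncomputable def quenched (n : ℕ) (α : ℝ)
    (F : (k : ℕ) → (Fin k → Fin n × Fin n) → ℝ) : ℝ :=
  ∑' k : ℕ, poissonPMF (α * n) k *
    ((∑ b : Fin k → Fin n × Fin n, F k b) / ((n : ℝ) ^ 2) ^ k)

/-- Boltzmann weight of the `t`-perturbed (cavity) system with realization
`(k, b, k', l)`: `exp(β Σ_ν σσ + β Σ_μ σ_{l μ})`. -/
noncomputable def cavWeight (n : ℕ) (β : ℝ) {k k' : ℕ} (b : Fin k → Fin n × Fin n)
    (l : Fin k' → Fin n) (σ : Conf n) : ℝ :=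
  Real.exp (β * ∑ ν : Fin k, (σ (b ν).1 : ℝ) * (σ (b ν).2 : ℝ)
    + β * ∑ μ : Fin k', (σ (l μ) : ℝ))

/-- Partition function of the `t`-perturbed (cavity) system. -/
noncomputable def Zcav (n : ℕ) (β : ℝ) {k k' : ℕ} (b : Fin k → Fin n × Fin n)
    (l : Fin k' → Fin n) : ℝ :=
  ∑ σ : Conf n, cavWeight n β b l σ

/-- Gibbs expectation `ω_t` of the `t`-perturbed (cavity) system at fixed realization. -/
noncomputable def gibbsCav (n : ℕ) (β : ℝ) {k k' : ℕ} (b : Fin k → Fin n × Fin n)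
    (l : Fin k' → Fin n) (f : Conf n → ℝ) : ℝ :=
  (∑ σ : Conf n, f σ * cavWeight n β b l σ) / Zcav n β b l

/-- Quenched expectation `E_t` of the `t`-perturbed system at connectivity `αt`:
`k` is Poisson(αt·n), `k'` is Poisson(2·αt·t), and all indices are i.i.d. uniform. -/
noncomputable def quenchedCav (n : ℕ) (αt t : ℝ)
    (F : (k : ℕ) → (Fin k → Fin n × Fin n) → (k' : ℕ) → (Fin k' → Fin n) → ℝ) : ℝ :=
  ∑' k : ℕ, ∑' k' : ℕ, poissonPMF (αt * n) k * poissonPMF (2 * αt * t) k' *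
    ((∑ b : Fin k → Fin n × Fin n, ∑ l : Fin k' → Fin n, F k b k' l) /
      (((n : ℝ) ^ 2) ^ k * (n : ℝ) ^ k'))

/-- The cavity function `Ψ_n(α̃, β; t) = E_t[ln Z_{n,t}] - E[ln Z_n(α̃, β)]`. -/
noncomputable def Psi (n : ℕ) (αt β t : ℝ) : ℝ :=
  quenchedCav n αt t (fun _ b _ l => Real.log (Zcav n β b l))
    - quenched n αt (fun _ b => Real.log (Zdil n β b))

-- ============ auxiliary lemmas ============
namespace CFS

instance confNonempty (n : ℕ) : Nonempty (Conf n) := ⟨fun _ => ⟨1, by simp⟩⟩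

lemma spin_cases {s : SpinVal} : (s : ℝ) = -1 ∨ (s : ℝ) = 1 := by
  have h := s.2
  simp only [SpinVal, Finset.mem_insert, Finset.mem_singleton] at h
  exact h

lemma abs_spin (s : SpinVal) : |(s : ℝ)| ≤ 1 := by
  rcases spin_cases (s := s) with h | h <;> rw [h] <;> norm_num

lemma cavWeight_pos {n k k' : ℕ} (β : ℝ) (b : Fin k → Fin n × Fin n)
    (l : Fin k' → Fin n) (σ : Conf n) : 0 < cavWeight n β b l σ := Real.exp_pos _

lemma Zcav_pos {n k k' : ℕ} (β : ℝ) (b : Fin k → Fin n × Fin n)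
    (l : Fin k' → Fin n) : 0 < Zcav n β b l :=
  Finset.sum_pos (fun σ _ => cavWeight_pos β b l σ) (by simp [Finset.univ_nonempty])

lemma exponent_abs_le {n k k' : ℕ} {β : ℝ} (hβ : 0 ≤ β) (b : Fin k → Fin n × Fin n)
    (l : Fin k' → Fin n) (σ : Conf n) :
    |β * ∑ ν : Fin k, (σ (b ν).1 : ℝ) * (σ (b ν).2 : ℝ)
      + β * ∑ μ : Fin k', (σ (l μ) : ℝ)| ≤ β * k + β * k' := by
  have h1 : |∑ ν : Fin k, (σ (b ν).1 : ℝ) * (σ (b ν).2 : ℝ)| ≤ (k : ℝ) := by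
    calc |∑ ν : Fin k, (σ (b ν).1 : ℝ) * (σ (b ν).2 : ℝ)|
        ≤ ∑ ν : Fin k, |(σ (b ν).1 : ℝ) * (σ (b ν).2 : ℝ)| := Finset.abs_sum_le_sum_abs _ _
      _ ≤ ∑ _ν : Fin k, (1 : ℝ) := by
          refine Finset.sum_le_sum fun ν _ => ?_
          rw [abs_mul]
          exact mul_le_one₀ (abs_spin _) (abs_nonneg _) (abs_spin _)
      _ = (k : ℝ) := by simp
  have h2 : |∑ μ : Fin k', (σ (l μ) : ℝ)| ≤ (k' : ℝ) := by
    calc |∑ μ : Fin k', (σ (l μ) : ℝ)| ≤ ∑ μ : Fin k', |(σ (l μ) : ℝ)| :=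
          Finset.abs_sum_le_sum_abs _ _
      _ ≤ ∑ _μ : Fin k', (1 : ℝ) := Finset.sum_le_sum fun μ _ => abs_spin _
      _ = (k' : ℝ) := by simp
  calc |β * ∑ ν : Fin k, (σ (b ν).1 : ℝ) * (σ (b ν).2 : ℝ) + β * ∑ μ : Fin k', (σ (l μ) : ℝ)|
      ≤ |β * ∑ ν : Fin k, (σ (b ν).1 : ℝ) * (σ (b ν).2 : ℝ)| + |β * ∑ μ : Fin k', (σ (l μ) : ℝ)| :=
        abs_add_le _ _
    _ ≤ β * k + β * k' := by
        rw [abs_mul, abs_mul, abs_of_nonneg hβ]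
        exact add_le_add (mul_le_mul_of_nonneg_left h1 hβ) (mul_le_mul_of_nonneg_left h2 hβ)

lemma abs_log_Zcav_le {n k k' : ℕ} {β : ℝ} (hβ : 0 ≤ β) (b : Fin k → Fin n × Fin n)
    (l : Fin k' → Fin n) :
    |Real.log (Zcav n β b l)| ≤ Real.log (Fintype.card (Conf n)) + β * k + β * k' := by
  set C : ℝ := (Fintype.card (Conf n) : ℝ) with hC
  have hcard : 0 < Fintype.card (Conf n) := Fintype.card_pos
  have hCpos : 0 < C := by rw [hC]; exact_mod_cast hcard
  have hC1 : (1:ℝ) ≤ C := by rw [hC]; exact_mod_cast hcard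
  have hub : Zcav n β b l ≤ C * Real.exp (β * k + β * k') := by
    rw [Zcav]
    calc ∑ σ : Conf n, cavWeight n β b l σ
        ≤ ∑ _σ : Conf n, Real.exp (β * k + β * k') := by
          refine Finset.sum_le_sum fun σ _ => ?_
          exact Real.exp_le_exp.2 ((abs_le.1 (exponent_abs_le hβ b l σ)).2)
      _ = C * Real.exp (β * k + β * k') := by simp [hC, Finset.sum_const, mul_comm]
  have hlb : C * Real.exp (-(β * k + β * k')) ≤ Zcav n β b l := by
    rw [Zcav]
    calc C * Real.exp (-(β * k + β * k'))
        = ∑ _σ : Conf n, Real.exp (-(β * k + β * k')) := by simp [hC, Finset.sum_const, mul_comm]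
      _ ≤ ∑ σ : Conf n, cavWeight n β b l σ := by
          refine Finset.sum_le_sum fun σ _ => ?_
          exact Real.exp_le_exp.2 (abs_le.1 (exponent_abs_le hβ b l σ)).1
  have hZpos := Zcav_pos (n := n) β b l
  rw [abs_le]
  constructor
  · have := Real.log_le_log (by positivity) hlb
    rw [Real.log_mul (ne_of_gt hCpos) (Real.exp_ne_zero _), Real.log_exp] at this
    have hlogC : 0 ≤ Real.log C := Real.log_nonneg hC1
    nlinarith [this]
  · have := Real.log_le_log hZpos hub
    rw [Real.log_mul (ne_of_gt hCpos) (Real.exp_ne_zero _), Real.log_exp] at this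
    linarith

lemma poissonPMF_nonneg {μ : ℝ} (hμ : 0 ≤ μ) (k : ℕ) : 0 ≤ poissonPMF μ k := by
  unfold poissonPMF; positivity

lemma poissonPMF_eq (μ : ℝ) (k : ℕ) :
    poissonPMF μ k = Real.exp (-μ) * (μ ^ k / (Nat.factorial k : ℝ)) := by
  rw [poissonPMF, mul_div_assoc]

lemma summable_poissonPMF (μ : ℝ) : Summable (poissonPMF μ) := by
  rw [show poissonPMF μ = fun k => Real.exp (-μ) * (μ ^ k / (Nat.factorial k : ℝ)) from
    funext (poissonPMF_eq μ)]
  exact (Real.summable_pow_div_factorial μ).mul_left _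

lemma tsum_exp_series (μ : ℝ) : ∑' k : ℕ, μ ^ k / (Nat.factorial k : ℝ) = Real.exp μ := by
  rw [Real.exp_eq_exp_ℝ, NormedSpace.exp_eq_tsum_div]

lemma tsum_poissonPMF (μ : ℝ) : ∑' k : ℕ, poissonPMF μ k = 1 := by
  simp_rw [poissonPMF_eq]
  rw [tsum_mul_left, tsum_exp_series, ← Real.exp_add]
  simp

lemma nat_le_two_pow (k : ℕ) : (k : ℝ) ≤ 2 ^ k := by
  exact_mod_cast (Nat.lt_two_pow_self (n := k)).le

lemma summable_poissonPMF_mul_k {μ : ℝ} (hμ : 0 ≤ μ) :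
    Summable (fun k : ℕ => poissonPMF μ k * k) := by
  refine Summable.of_nonneg_of_le (fun k => by
      have := poissonPMF_nonneg hμ k; positivity)
    (fun k => ?_) (((Real.summable_pow_div_factorial (2*μ)).mul_left (Real.exp (-μ))))
  rw [poissonPMF_eq]
  have h1 : μ ^ k / (Nat.factorial k : ℝ) * k ≤ (2*μ) ^ k / (Nat.factorial k : ℝ) := by
    rw [mul_pow, div_mul_eq_mul_div, mul_comm (μ ^ k) (k : ℝ)]
    have h2 : (k:ℝ) * μ ^ k ≤ 2 ^ k * μ ^ k :=
      mul_le_mul_of_nonneg_right (nat_le_two_pow k) (pow_nonneg hμ k)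
    exact div_le_div_of_nonneg_right h2 (by positivity) |>.trans_eq rfl
  calc Real.exp (-μ) * (μ ^ k / (Nat.factorial k : ℝ)) * k
      = Real.exp (-μ) * (μ ^ k / (Nat.factorial k : ℝ) * k) := by ring
    _ ≤ Real.exp (-μ) * ((2*μ) ^ k / (Nat.factorial k : ℝ)) := by
        exact mul_le_mul_of_nonneg_left h1 (Real.exp_nonneg _)

lemma poissonPMF_succ_mul (μ : ℝ) (n : ℕ) :
    poissonPMF μ (n+1) * (n+1 : ℕ) = μ * poissonPMF μ n := by
  rw [poissonPMF, poissonPMF, Nat.factorial_succ]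
  have h : ((n:ℕ)+1 : ℝ) ≠ 0 := by positivity
  push_cast
  field_simp
  ring

lemma tsum_poissonPMF_mul_k {μ : ℝ} (hμ : 0 ≤ μ) :
    ∑' k : ℕ, poissonPMF μ k * k = μ := by
  rw [Summable.tsum_eq_zero_add (summable_poissonPMF_mul_k hμ)]
  simp only [Nat.cast_zero, mul_zero, zero_add]
  have h : ∀ n : ℕ, poissonPMF μ (n+1) * ((n:ℝ)+1) = μ * poissonPMF μ n := by
    intro n
    have := poissonPMF_succ_mul μ n
    push_cast at this
    exact this
  calc ∑' n : ℕ, poissonPMF μ (n+1) * (((n+1 : ℕ)):ℝ)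
      = ∑' n : ℕ, μ * poissonPMF μ n := by
        refine tsum_congr fun n => ?_
        push_cast
        exact h n
    _ = μ := by rw [tsum_mul_left, tsum_poissonPMF]; ring

/-- Summability of `poissonPMF μ k * (A + B k)`. -/
lemma summable_p_affine {μ : ℝ} (hμ : 0 ≤ μ) (A B : ℝ) :
    Summable (fun k : ℕ => poissonPMF μ k * (A + B * k)) := by
  have : (fun k : ℕ => poissonPMF μ k * (A + B * k))
      = fun k : ℕ => A * poissonPMF μ k + B * (poissonPMF μ k * k) := by
    funext k; ring
  rw [this]
  exact ((summable_poissonPMF μ).mul_left A).add ((summable_poissonPMF_mul_k hμ).mul_left B)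

lemma tsum_p_affine {μ : ℝ} (hμ : 0 ≤ μ) (A B : ℝ) :
    ∑' k : ℕ, poissonPMF μ k * (A + B * k) = A + B * μ := by
  have h : ∀ k : ℕ, poissonPMF μ k * (A + B * k)
      = A * poissonPMF μ k + B * (poissonPMF μ k * k) := fun k => by ring
  rw [tsum_congr h, Summable.tsum_add ((summable_poissonPMF μ).mul_left A)
    ((summable_poissonPMF_mul_k hμ).mul_left B), tsum_mul_left, tsum_mul_left,
    tsum_poissonPMF, tsum_poissonPMF_mul_k hμ]
  ring

lemma summable_of_abs_le_p_affine {μ : ℝ} (hμ : 0 ≤ μ) {A B : ℝ} {a : ℕ → ℝ}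
    (ha : ∀ k, |a k| ≤ poissonPMF μ k * (A + B * k)) : Summable a :=
  Summable.of_norm_bounded (summable_p_affine hμ A B) (fun k => ha k)

lemma abs_tsum_le_p_affine {μ : ℝ} (hμ : 0 ≤ μ) {A B : ℝ} {a : ℕ → ℝ}
    (ha : ∀ k, |a k| ≤ poissonPMF μ k * (A + B * k)) : |∑' k, a k| ≤ A + B * μ := by
  have hs := summable_of_abs_le_p_affine hμ ha
  calc |∑' k, a k| ≤ ∑' k, |a k| := by
        rw [show |∑' k, a k| = ‖∑' k, a k‖ from (Real.norm_eq_abs _).symm]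
        exact (norm_tsum_le_tsum_norm (by simpa [Real.norm_eq_abs] using hs.abs)).trans_eq
          (by simp [Real.norm_eq_abs])
    _ ≤ ∑' k, poissonPMF μ k * (A + B * k) :=
        Summable.tsum_le_tsum ha hs.abs (summable_p_affine hμ A B)
    _ = A + B * μ := tsum_p_affine hμ A B

end CFS
namespace CFS

lemma abs_gibbsCav_spin_le {n k k' : ℕ} (β : ℝ) (b : Fin k → Fin n × Fin n)
    (l : Fin k' → Fin n) (i₀ : Fin n) :
    |gibbsCav n β b l (fun σ => (σ i₀ : ℝ))| ≤ 1 := by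
  rw [gibbsCav, abs_div, abs_of_pos (Zcav_pos β b l)]
  rw [div_le_one (Zcav_pos β b l)]
  calc |∑ σ : Conf n, (σ i₀ : ℝ) * cavWeight n β b l σ|
      ≤ ∑ σ : Conf n, |(σ i₀ : ℝ) * cavWeight n β b l σ| := Finset.abs_sum_le_sum_abs _ _
    _ ≤ ∑ σ : Conf n, cavWeight n β b l σ := by
        refine Finset.sum_le_sum fun σ _ => ?_
        rw [abs_mul, abs_of_pos (cavWeight_pos β b l σ)]
        exact mul_le_of_le_one_left (cavWeight_pos β b l σ).le (abs_spin _)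
    _ = Zcav n β b l := rfl

lemma tanh_lt_one' {β : ℝ} : Real.tanh β < 1 := by
  rw [Real.tanh_eq_sinh_div_cosh, div_lt_one (Real.cosh_pos β)]
  exact Real.sinh_lt_cosh β

lemma exp_spin (β : ℝ) (s : SpinVal) :
    Real.exp (β * s) = Real.cosh β + (s : ℝ) * Real.sinh β := by
  rcases spin_cases (s := s) with h | h <;> rw [h] <;>
    simp [Real.cosh_eq, Real.sinh_eq] <;> ring

lemma cavWeight_cons {n k k' : ℕ} (β : ℝ) (b : Fin k → Fin n × Fin n)
    (l : Fin k' → Fin n) (i₀ : Fin n) (σ : Conf n) :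
    cavWeight n β b (Fin.cons i₀ l) σ = cavWeight n β b l σ * Real.exp (β * σ i₀) := by
  rw [cavWeight, cavWeight, ← Real.exp_add]
  congr 1
  rw [Fin.sum_univ_succ]
  simp only [Fin.cons_zero, Fin.cons_succ]
  ring

lemma Zcav_cons {n k k' : ℕ} (β : ℝ) (b : Fin k → Fin n × Fin n)
    (l : Fin k' → Fin n) (i₀ : Fin n) :
    Zcav n β b (Fin.cons i₀ l) =
      Real.cosh β * Zcav n β b l * (1 + Real.tanh β * gibbsCav n β b l (fun σ => (σ i₀ : ℝ))) := by
  have hZ := Zcav_pos β b l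
  have hco := Real.cosh_pos β
  have hA : Zcav n β b (Fin.cons i₀ l) =
      Real.cosh β * Zcav n β b l
        + Real.sinh β * ∑ σ : Conf n, (σ i₀ : ℝ) * cavWeight n β b l σ := by
    rw [Zcav]
    simp_rw [cavWeight_cons, exp_spin]
    rw [Finset.sum_congr rfl (fun σ _ => by ring :
      ∀ σ ∈ Finset.univ, cavWeight n β b l σ * (Real.cosh β + (σ i₀:ℝ) * Real.sinh β) =
        Real.cosh β * cavWeight n β b l σ + Real.sinh β * ((σ i₀:ℝ) * cavWeight n β b l σ))]
    rw [Finset.sum_add_distrib, ← Finset.mul_sum, ← Finset.mul_sum]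
    rfl
  rw [hA, gibbsCav, Real.tanh_eq_sinh_div_cosh]
  field_simp

lemma one_add_tanh_gibbs_pos {n k k' : ℕ} (β : ℝ) (b : Fin k → Fin n × Fin n)
    (l : Fin k' → Fin n) (i₀ : Fin n) :
    0 < 1 + Real.tanh β * gibbsCav n β b l (fun σ => (σ i₀ : ℝ)) := by
  have h := Zcav_cons β b l i₀
  have h1 : 0 < Zcav n β b (Fin.cons i₀ l) := Zcav_pos β b _
  have h2 : 0 < Real.cosh β * Zcav n β b l := mul_pos (Real.cosh_pos β) (Zcav_pos β b l)
  nlinarith [h1, h2]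

lemma log_Zcav_cons {n k k' : ℕ} (β : ℝ) (b : Fin k → Fin n × Fin n)
    (l : Fin k' → Fin n) (i₀ : Fin n) :
    Real.log (Zcav n β b (Fin.cons i₀ l)) =
      Real.log (Zcav n β b l) + Real.log (Real.cosh β)
        + Real.log (1 + Real.tanh β * gibbsCav n β b l (fun σ => (σ i₀ : ℝ))) := by
  have h2 : 0 < Real.cosh β * Zcav n β b l := mul_pos (Real.cosh_pos β) (Zcav_pos β b l)
  rw [Zcav_cons, Real.log_mul (ne_of_gt h2)
    (ne_of_gt (one_add_tanh_gibbs_pos β b l i₀)),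
    Real.log_mul (ne_of_gt (Real.cosh_pos β)) (ne_of_gt (Zcav_pos β b l))]
  ring

lemma abs_log_one_add_le {n k k' : ℕ} {β : ℝ} (hβ : 0 ≤ β) (b : Fin k → Fin n × Fin n)
    (l : Fin k' → Fin n) (i₀ : Fin n) :
    |Real.log (1 + Real.tanh β * gibbsCav n β b l (fun σ => (σ i₀ : ℝ)))|
      ≤ -Real.log (1 - Real.tanh β) := by
  set θ := Real.tanh β with hθ
  have hθ0 : 0 ≤ θ := by
    rw [hθ, Real.tanh_eq_sinh_div_cosh]
    exact div_nonneg (Real.sinh_nonneg_iff.mpr hβ) (Real.cosh_pos β).le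
  have hθ1 : θ < 1 := tanh_lt_one'
  set ω := gibbsCav n β b l (fun σ => (σ i₀ : ℝ)) with hω
  have hωle := abs_gibbsCav_spin_le β b l i₀
  rw [abs_le] at hωle
  have hlow : 1 - θ ≤ 1 + θ * ω := by nlinarith
  have hhigh : 1 + θ * ω ≤ 1 + θ := by nlinarith
  have h1θ : (0:ℝ) < 1 - θ := by linarith
  rw [abs_le]
  constructor
  · rw [neg_neg]
    calc Real.log (1 - θ) ≤ Real.log (1 + θ * ω) := Real.log_le_log h1θ hlow
      _ = _ := rfl
  · have h1 : Real.log (1 + θ * ω) ≤ Real.log (1 + θ) :=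
      Real.log_le_log (by linarith) hhigh
    have h2 : Real.log (1 + θ) ≤ -Real.log (1 - θ) := by
      rw [← Real.log_inv, ← one_div]
      apply Real.log_le_log (by linarith)
      rw [le_div_iff₀ h1θ]
      nlinarith
    linarith

/-- splitting a sum over `Fin (k'+1) → Fin n`. -/
lemma sum_fun_succ {n k' : ℕ} (f : (Fin (k'+1) → Fin n) → ℝ) :
    ∑ l' : Fin (k'+1) → Fin n, f l'
      = ∑ l : Fin k' → Fin n, ∑ i₀ : Fin n, f (Fin.cons i₀ l) := by
  rw [← (Fin.consEquiv (fun _ : Fin (k'+1) => Fin n)).sum_comp f]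
  rw [Fintype.sum_prod_type]
  rw [Finset.sum_comm]
  simp [Fin.consEquiv]

/-- real cast of the number of bond realizations. -/
lemma card_b_real (n k : ℕ) :
    ((Fintype.card (Fin k → Fin n × Fin n)) : ℝ) = ((n:ℝ)^2)^k := by
  rw [Fintype.card_fun]
  push_cast
  simp [Fintype.card_prod]
  ring

lemma card_l_real (n k' : ℕ) :
    ((Fintype.card (Fin k' → Fin n)) : ℝ) = (n:ℝ)^k' := by
  rw [Fintype.card_fun]
  push_cast
  simp

/-- averaging bound over `b` and `l`. -/
lemma abs_avg_le {n k k' : ℕ} (hn : 1 ≤ n) {C : ℝ}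
    (f : (Fin k → Fin n × Fin n) → (Fin k' → Fin n) → ℝ)
    (hf : ∀ b l, |f b l| ≤ C) :
    |(∑ b : Fin k → Fin n × Fin n, ∑ l : Fin k' → Fin n, f b l)
        / (((n:ℝ)^2)^k * (n:ℝ)^k')| ≤ C := by
  have hnpos : (0:ℝ) < n := by exact_mod_cast hn
  have hden : (0:ℝ) < ((n:ℝ)^2)^k * (n:ℝ)^k' := by positivity
  rw [abs_div, abs_of_pos hden, div_le_iff₀ hden]
  calc |∑ b : Fin k → Fin n × Fin n, ∑ l : Fin k' → Fin n, f b l|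
      ≤ ∑ b : Fin k → Fin n × Fin n, |∑ l : Fin k' → Fin n, f b l| :=
        Finset.abs_sum_le_sum_abs _ _
    _ ≤ ∑ b : Fin k → Fin n × Fin n, ∑ l : Fin k' → Fin n, |f b l| :=
        Finset.sum_le_sum fun b _ => Finset.abs_sum_le_sum_abs _ _
    _ ≤ ∑ _b : Fin k → Fin n × Fin n, ∑ _l : Fin k' → Fin n, C :=
        Finset.sum_le_sum fun b _ => Finset.sum_le_sum fun l _ => hf b l
    _ = ((n:ℝ)^2)^k * ((n:ℝ)^k' * C) := by
        rw [Finset.sum_const, Finset.sum_const]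
        simp only [Finset.card_univ, nsmul_eq_mul]
        rw [← card_b_real n k, ← card_l_real n k']
    _ = C * (((n:ℝ)^2)^k * (n:ℝ)^k') := by ring

end CFS
namespace CFS

/-- k-marginal of the quenched average of `log Zcav` at fixed `k'`. -/
noncomputable def Gfun (n : ℕ) (αt β : ℝ) (k' : ℕ) : ℝ :=
  ∑' k : ℕ, poissonPMF (αt * n) k *
    ((∑ b : Fin k → Fin n × Fin n, ∑ l : Fin k' → Fin n, Real.log (Zcav n β b l)) /
      (((n : ℝ) ^ 2) ^ k * (n : ℝ) ^ k'))

/-- k-marginal of the quenched average of the `log(1+θω)` observable at fixed `k'`. -/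
noncomputable def Hfun (n : ℕ) (αt β : ℝ) (k' : ℕ) : ℝ :=
  ∑' k : ℕ, poissonPMF (αt * n) k *
    ((∑ b : Fin k → Fin n × Fin n, ∑ l : Fin k' → Fin n,
        (1 / (n : ℝ)) * ∑ i₀ : Fin n,
          Real.log (1 + Real.tanh β * gibbsCav n β b l (fun σ => (σ i₀ : ℝ)))) /
      (((n : ℝ) ^ 2) ^ k * (n : ℝ) ^ k')) 

section Bounds

variable {n : ℕ} {αt β : ℝ} (hn : 1 ≤ n) (hα : 0 < αt) (hβ : 0 ≤ β)

lemma mu_nonneg (hα : 0 < αt) : (0:ℝ) ≤ αt * n := by positivity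

include hn hα hβ in
lemma Gterm_bound (k' k : ℕ) :
    |poissonPMF (αt * n) k *
      ((∑ b : Fin k → Fin n × Fin n, ∑ l : Fin k' → Fin n, Real.log (Zcav n β b l)) /
        (((n : ℝ) ^ 2) ^ k * (n : ℝ) ^ k'))|
    ≤ poissonPMF (αt * n) k *
        ((Real.log (Fintype.card (Conf n)) + β * k') + β * k) := by
  rw [abs_mul, abs_of_nonneg (poissonPMF_nonneg (mu_nonneg hα) k)]
  refine mul_le_mul_of_nonneg_left ?_ (poissonPMF_nonneg (mu_nonneg hα) k)
  have h := abs_avg_le (k := k) (k' := k') hn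
    (C := Real.log (Fintype.card (Conf n)) + β * k + β * k')
    (fun b l => Real.log (Zcav n β b l))
    (fun b l => abs_log_Zcav_le hβ b l)
  calc _ ≤ Real.log (Fintype.card (Conf n)) + β * k + β * k' := h
    _ = _ := by ring

include hn hα hβ in
lemma summable_Gterm (k' : ℕ) :
    Summable (fun k : ℕ => poissonPMF (αt * n) k *
      ((∑ b : Fin k → Fin n × Fin n, ∑ l : Fin k' → Fin n, Real.log (Zcav n β b l)) /
        (((n : ℝ) ^ 2) ^ k * (n : ℝ) ^ k'))) :=
  summable_of_abs_le_p_affine (mu_nonneg hα) (Gterm_bound hn hα hβ k')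

include hn hα hβ in
lemma abs_Gfun_le (k' : ℕ) :
    |Gfun n αt β k'| ≤ (Real.log (Fintype.card (Conf n)) + β * (αt * n)) + β * k' := by
  have := abs_tsum_le_p_affine (mu_nonneg hα) (Gterm_bound hn hα hβ k')
  rw [Gfun]
  linarith

include hn hβ in
lemma Hinner_bound (k k' : ℕ) (b : Fin k → Fin n × Fin n) (l : Fin k' → Fin n) :
    |(1 / (n : ℝ)) * ∑ i₀ : Fin n,
        Real.log (1 + Real.tanh β * gibbsCav n β b l (fun σ => (σ i₀ : ℝ)))|
      ≤ -Real.log (1 - Real.tanh β) := by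
  have hnpos : (0:ℝ) < n := by exact_mod_cast hn
  rw [abs_mul, abs_of_nonneg (by positivity : (0:ℝ) ≤ 1/(n:ℝ))]
  rw [show (1:ℝ)/(n:ℝ) * |∑ i₀ : Fin n, Real.log (1 + Real.tanh β * gibbsCav n β b l
      (fun σ => (σ i₀ : ℝ)))| = |∑ i₀ : Fin n, Real.log (1 + Real.tanh β * gibbsCav n β b l
      (fun σ => (σ i₀ : ℝ)))| / n from by ring]
  rw [div_le_iff₀ hnpos]
  calc |∑ i₀ : Fin n, Real.log (1 + Real.tanh β * gibbsCav n β b l (fun σ => (σ i₀ : ℝ)))|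
      ≤ ∑ i₀ : Fin n, |Real.log (1 + Real.tanh β * gibbsCav n β b l (fun σ => (σ i₀ : ℝ)))| :=
        Finset.abs_sum_le_sum_abs _ _
    _ ≤ ∑ _i₀ : Fin n, -Real.log (1 - Real.tanh β) :=
        Finset.sum_le_sum fun i₀ _ => abs_log_one_add_le hβ b l i₀
    _ = -Real.log (1 - Real.tanh β) * n := by
        rw [Finset.sum_const]; simp [mul_comm]

include hn hα hβ in
lemma Hterm_bound (k' k : ℕ) :
    |poissonPMF (αt * n) k *
      ((∑ b : Fin k → Fin n × Fin n, ∑ l : Fin k' → Fin n,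
          (1 / (n : ℝ)) * ∑ i₀ : Fin n,
            Real.log (1 + Real.tanh β * gibbsCav n β b l (fun σ => (σ i₀ : ℝ)))) /
        (((n : ℝ) ^ 2) ^ k * (n : ℝ) ^ k'))|
    ≤ poissonPMF (αt * n) k * ((-Real.log (1 - Real.tanh β)) + 0 * k) := by
  rw [abs_mul, abs_of_nonneg (poissonPMF_nonneg (mu_nonneg hα) k)]
  refine mul_le_mul_of_nonneg_left ?_ (poissonPMF_nonneg (mu_nonneg hα) k)
  have h := abs_avg_le (k := k) (k' := k') hn (C := -Real.log (1 - Real.tanh β)) _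
    (fun b l => Hinner_bound hn hβ k k' b l)
  calc _ ≤ -Real.log (1 - Real.tanh β) := h
    _ = _ := by ring

include hn hα hβ in
lemma summable_Hterm (k' : ℕ) :
    Summable (fun k : ℕ => poissonPMF (αt * n) k *
      ((∑ b : Fin k → Fin n × Fin n, ∑ l : Fin k' → Fin n,
          (1 / (n : ℝ)) * ∑ i₀ : Fin n,
            Real.log (1 + Real.tanh β * gibbsCav n β b l (fun σ => (σ i₀ : ℝ)))) /
        (((n : ℝ) ^ 2) ^ k * (n : ℝ) ^ k'))) :=
  summable_of_abs_le_p_affine (mu_nonneg hα) (Hterm_bound hn hα hβ k')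

include hn hα hβ in
lemma abs_Hfun_le (k' : ℕ) :
    |Hfun n αt β k'| ≤ -Real.log (1 - Real.tanh β) := by
  have := abs_tsum_le_p_affine (mu_nonneg hα) (Hterm_bound hn hα hβ k')
  rw [Hfun]
  linarith [this]

include hn hα hβ in
/-- The key recursion for `Gfun`. -/
lemma Gfun_succ (k' : ℕ) :
    Gfun n αt β (k'+1)
      = Real.log (Real.cosh β) + Gfun n αt β k' + Hfun n αt β k' := by
  have hnpos : (0:ℝ) < n := by exact_mod_cast hn
  have key : ∀ k : ℕ, ∀ b : Fin k → Fin n × Fin n,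
      ∑ l' : Fin (k'+1) → Fin n, Real.log (Zcav n β b l')
        = (n:ℝ) * ∑ l : Fin k' → Fin n, Real.log (Zcav n β b l)
          + (n:ℝ)^k' * (n:ℝ) * Real.log (Real.cosh β)
          + (n:ℝ) * ∑ l : Fin k' → Fin n, (1 / (n : ℝ)) * ∑ i₀ : Fin n,
              Real.log (1 + Real.tanh β * gibbsCav n β b l (fun σ => (σ i₀ : ℝ))) := by
    intro k b
    rw [sum_fun_succ]
    have : ∀ l : Fin k' → Fin n, ∑ i₀ : Fin n, Real.log (Zcav n β b (Fin.cons i₀ l))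
        = (n:ℝ) * Real.log (Zcav n β b l) + (n:ℝ) * Real.log (Real.cosh β)
          + (n:ℝ) * ((1 / (n : ℝ)) * ∑ i₀ : Fin n,
              Real.log (1 + Real.tanh β * gibbsCav n β b l (fun σ => (σ i₀ : ℝ)))) := by
      intro l
      rw [Finset.sum_congr rfl (fun i₀ _ => log_Zcav_cons β b l i₀)]
      rw [Finset.sum_add_distrib, Finset.sum_add_distrib, Finset.sum_const, Finset.sum_const]
      simp only [Finset.card_univ, Fintype.card_fin, nsmul_eq_mul]
      field_simp
    rw [Finset.sum_congr rfl (fun l _ => this l)]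
    rw [Finset.sum_add_distrib, Finset.sum_add_distrib, Finset.sum_const,
      ← Finset.mul_sum, ← Finset.mul_sum]
    simp only [Finset.card_univ, nsmul_eq_mul]
    rw [show ((Fintype.card (Fin k' → Fin n)):ℝ) = (n:ℝ)^k' from card_l_real n k']
    ring
  have termwise : ∀ k : ℕ,
      poissonPMF (αt * n) k *
        ((∑ b : Fin k → Fin n × Fin n, ∑ l' : Fin (k'+1) → Fin n, Real.log (Zcav n β b l')) /
          (((n : ℝ) ^ 2) ^ k * (n : ℝ) ^ (k'+1)))
      = Real.log (Real.cosh β) * poissonPMF (αt * n) k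
        + poissonPMF (αt * n) k *
          ((∑ b : Fin k → Fin n × Fin n, ∑ l : Fin k' → Fin n, Real.log (Zcav n β b l)) /
            (((n : ℝ) ^ 2) ^ k * (n : ℝ) ^ k'))
        + poissonPMF (αt * n) k *
          ((∑ b : Fin k → Fin n × Fin n, ∑ l : Fin k' → Fin n,
              (1 / (n : ℝ)) * ∑ i₀ : Fin n,
                Real.log (1 + Real.tanh β * gibbsCav n β b l (fun σ => (σ i₀ : ℝ)))) /
            (((n : ℝ) ^ 2) ^ k * (n : ℝ) ^ k')) := by
    intro k
    rw [Finset.sum_congr rfl (fun b _ => key k b)]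
    rw [Finset.sum_add_distrib, Finset.sum_add_distrib, Finset.sum_const,
      ← Finset.mul_sum, ← Finset.mul_sum]
    simp only [Finset.card_univ, nsmul_eq_mul]
    rw [show ((Fintype.card (Fin k → Fin n × Fin n)):ℝ) = ((n:ℝ)^2)^k from card_b_real n k]
    have hd : (((n : ℝ) ^ 2) ^ k) ≠ 0 := by positivity
    field_simp
    ring
  rw [Gfun]
  rw [tsum_congr termwise]
  rw [Summable.tsum_add (((summable_poissonPMF _).mul_left _).add ((summable_Gterm hn hα hβ k')))
      (summable_Hterm hn hα hβ k'),
    Summable.tsum_add ((summable_poissonPMF _).mul_left _) (summable_Gterm hn hα hβ k'),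
    tsum_mul_left, tsum_poissonPMF]
  rw [Gfun, Hfun]
  ring

end Bounds

/-- Exchanging the two Poisson sums in `quenchedCav`. -/
lemma quenchedCav_swap {n : ℕ} (hn : 1 ≤ n) {αt t : ℝ} (hμ1 : (0:ℝ) ≤ αt * n)
    (hμ2 : (0:ℝ) ≤ 2 * αt * t)
    (F : (k : ℕ) → (Fin k → Fin n × Fin n) → (k' : ℕ) → (Fin k' → Fin n) → ℝ)
    {A B : ℝ} (hF : ∀ k b k' l, |F k b k' l| ≤ A + B * k + B * k') (hB : 0 ≤ B) :
    quenchedCav n αt t F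
      = ∑' k' : ℕ, poissonPMF (2 * αt * t) k' *
          ∑' k : ℕ, poissonPMF (αt * n) k *
            ((∑ b : Fin k → Fin n × Fin n, ∑ l : Fin k' → Fin n, F k b k' l) /
              (((n : ℝ) ^ 2) ^ k * (n : ℝ) ^ k')) := by
  set c : ℕ → ℕ → ℝ := fun k k' => poissonPMF (αt * n) k * poissonPMF (2 * αt * t) k' *
    ((∑ b : Fin k → Fin n × Fin n, ∑ l : Fin k' → Fin n, F k b k' l) /
      (((n : ℝ) ^ 2) ^ k * (n : ℝ) ^ k')) with hc
  have hsum : Summable (Function.uncurry c) := by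
    have hbdd : ∀ p : ℕ × ℕ, ‖Function.uncurry c p‖
        ≤ A * (poissonPMF (αt * n) p.1 * poissonPMF (2 * αt * t) p.2)
          + B * ((poissonPMF (αt * n) p.1 * p.1) * poissonPMF (2 * αt * t) p.2)
          + B * (poissonPMF (αt * n) p.1 * (poissonPMF (2 * αt * t) p.2 * p.2)) := by
      rintro ⟨k, k'⟩
      have h1 := poissonPMF_nonneg hμ1 k
      have h2 := poissonPMF_nonneg hμ2 k'
      have havg := abs_avg_le hn (fun b l => F k b k' l) (fun b l => hF k b k' l)
      simp only [Function.uncurry, hc, Real.norm_eq_abs]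
      rw [abs_mul, abs_of_nonneg (by positivity : (0:ℝ) ≤ poissonPMF (αt*n) k *
        poissonPMF (2*αt*t) k')]
      calc poissonPMF (αt*n) k * poissonPMF (2*αt*t) k' *
            |(∑ b : Fin k → Fin n × Fin n, ∑ l : Fin k' → Fin n, F k b k' l) /
              (((n : ℝ) ^ 2) ^ k * (n : ℝ) ^ k')|
          ≤ poissonPMF (αt*n) k * poissonPMF (2*αt*t) k' * (A + B * k + B * k') :=
            mul_le_mul_of_nonneg_left havg (by positivity)
        _ = _ := by ring
    refine Summable.of_norm_bounded ?_ hbdd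
    refine Summable.add (Summable.add ?_ ?_) ?_
    · exact (((summable_poissonPMF _).mul_of_nonneg (summable_poissonPMF _)
        (fun k => poissonPMF_nonneg hμ1 k) (fun k => poissonPMF_nonneg hμ2 k))).mul_left A
    · refine Summable.mul_left B ?_
      exact ((summable_poissonPMF_mul_k hμ1).mul_of_nonneg (summable_poissonPMF _)
        (fun k => by have := poissonPMF_nonneg hμ1 k; positivity)
        (fun k => poissonPMF_nonneg hμ2 k))
    · refine Summable.mul_left B ?_
      exact ((summable_poissonPMF _).mul_of_nonneg (summable_poissonPMF_mul_k hμ2)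
        (fun k => poissonPMF_nonneg hμ1 k)
        (fun k => by have := poissonPMF_nonneg hμ2 k; positivity))
  have hswap := Summable.tsum_comm hsum
  rw [quenchedCav]
  rw [show (∑' k : ℕ, ∑' k' : ℕ, c k k') = ∑' k' : ℕ, ∑' k : ℕ, c k k' from hswap.symm]
  refine tsum_congr fun k' => ?_
  rw [← tsum_mul_left]
  refine tsum_congr fun k => ?_
  rw [hc]
  ring

end CFS
namespace CFS

lemma hasDerivAt_poissonPMF (lam : ℝ) (k : ℕ) (t : ℝ) :
    HasDerivAt (fun t' : ℝ => poissonPMF (lam * t') k)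
      (lam * ((if k = 0 then 0 else poissonPMF (lam * t) (k - 1)) - poissonPMF (lam * t) k))
      t := by
  have hlin : HasDerivAt (fun t' : ℝ => lam * t') lam t := by
    simpa using (hasDerivAt_id t).const_mul lam
  have hexp : HasDerivAt (fun t' : ℝ => Real.exp (-(lam * t')))
      (Real.exp (-(lam * t)) * (-lam)) t := hlin.neg.exp
  have hpow : HasDerivAt (fun t' : ℝ => (lam * t') ^ k)
      ((k : ℝ) * (lam * t) ^ (k - 1) * lam) t := hlin.pow k
  have hmul := (hexp.mul hpow).div_const (Nat.factorial k : ℝ)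
  have heq : (fun t' : ℝ => poissonPMF (lam * t') k)
      = fun t' : ℝ => Real.exp (-(lam * t')) * (lam * t') ^ k / (Nat.factorial k : ℝ) := by
    funext t'; rw [poissonPMF]
  rw [heq]
  refine hmul.congr_deriv (Eq.symm ?_)
  rcases k with _ | j
  · simp [poissonPMF]; ring
  · simp only [Nat.succ_ne_zero, if_false, Nat.succ_sub_one]
    rw [poissonPMF, poissonPMF, Nat.factorial_succ]
    have hfac : ((Nat.factorial j : ℝ)) ≠ 0 := by positivity
    have hfac2 : (((j:ℝ) + 1)) ≠ 0 := by positivity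
    push_cast
    field_simp
    ring

/-- Bound for the Poisson pmf on `(0,1)`. -/
lemma poissonPMF_le_of_mem {lam y : ℝ} (hlam : 0 ≤ lam) (hy : y ∈ Set.Ioo (0:ℝ) 1) (j : ℕ) :
    poissonPMF (lam * y) j ≤ Real.exp lam * poissonPMF lam j := by
  have h1 : (0:ℝ) < y := hy.1
  have h2 : y < 1 := hy.2
  have hm : 0 ≤ lam * y := by positivity
  have key : Real.exp lam * poissonPMF lam j = lam ^ j / (Nat.factorial j : ℝ) := by
    rw [poissonPMF]
    rw [show Real.exp lam * (Real.exp (-lam) * lam ^ j / (Nat.factorial j : ℝ))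
      = (Real.exp lam * Real.exp (-lam)) * lam ^ j / (Nat.factorial j : ℝ) from by ring]
    rw [← Real.exp_add]
    simp
  rw [key, poissonPMF]
  have hexp : Real.exp (-(lam * y)) ≤ 1 := Real.exp_le_one_iff.mpr (by nlinarith)
  have hpow : (lam * y) ^ j ≤ lam ^ j := by
    apply pow_le_pow_left₀ hm
    nlinarith
  calc Real.exp (-(lam * y)) * (lam * y) ^ j / (Nat.factorial j : ℝ)
      ≤ 1 * lam ^ j / (Nat.factorial j : ℝ) := by
        apply div_le_div_of_nonneg_right _ (by positivity)
        exact mul_le_mul hexp hpow (by positivity) (by norm_num)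
    _ = lam ^ j / (Nat.factorial j : ℝ) := by ring

end CFS

open CFS

/-- **Streaming of the cavity function (finite `N`, exact form).**
For `t ∈ (0,1)` the map `t ↦ Ψ_N(α̃, β; t)` is differentiable, with
`∂Ψ_N/∂t = 2α̃·ln cosh β + 2α̃·E_t[(1/N) Σ_{i₀} ln(1 + θ·ω_t(σ_{i₀}))]`,
where `θ = tanh β`. -/
theorem cavity_function_streaming (N : ℕ) (hN : 1 ≤ N) (αt β : ℝ)
    (hαt : 0 < αt) (hβ : 0 ≤ β) (t : ℝ) (ht : t ∈ Set.Ioo (0 : ℝ) 1) :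
    HasDerivAt (fun t' : ℝ => Psi N αt β t')
      (2 * αt * Real.log (Real.cosh β)
        + 2 * αt * quenchedCav N αt t (fun _ b _ l =>
            (1 / (N : ℝ)) * ∑ i₀ : Fin N,
              Real.log (1 + Real.tanh β * gibbsCav N β b l (fun σ => (σ i₀ : ℝ)))))
      t := by
  classical
  have hnR : (0:ℝ) < N := by exact_mod_cast hN
  have hlamnn : (0:ℝ) ≤ 2 * αt := by positivity
  have hμ1 : (0:ℝ) ≤ αt * N := by positivity
  have hμ2t : (0:ℝ) ≤ 2 * αt * t := by nlinarith [ht.1]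
  set A : ℝ := Real.log (Fintype.card (Conf N)) + β * (αt * N) with hAdef
  set C₂ : ℝ := -Real.log (1 - Real.tanh β) with hC2def
  have hθ0 : 0 ≤ Real.tanh β := by
    rw [Real.tanh_eq_sinh_div_cosh]
    exact div_nonneg (Real.sinh_nonneg_iff.mpr hβ) (Real.cosh_pos β).le
  have hθ1 : Real.tanh β < 1 := tanh_lt_one'
  have hA0 : 0 ≤ A := by
    rw [hAdef]
    have h1 : (1:ℝ) ≤ (Fintype.card (Conf N) : ℝ) := by
      exact_mod_cast (Fintype.card_pos (α := Conf N))
    have := Real.log_nonneg h1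
    positivity
  have hC20 : 0 ≤ C₂ := by
    rw [hC2def, neg_nonneg]
    exact Real.log_nonpos (by linarith) (by linarith)
  have hgb : ∀ k' : ℕ, |Gfun N αt β k'| ≤ A + β * k' := by
    intro k'
    have h0 := abs_Gfun_le (n := N) hN hαt hβ k'
    rw [hAdef]; linarith
  have hhb : ∀ k' : ℕ, |Hfun N αt β k'| ≤ C₂ := fun k' => abs_Hfun_le (n := N) hN hαt hβ k'
  -- representation of the cavity quenched average
  have hrep : ∀ t' ∈ Set.Ioo (0:ℝ) 1,
      quenchedCav N αt t' (fun _ b _ l => Real.log (Zcav N β b l))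
        = ∑' k' : ℕ, poissonPMF (2 * αt * t') k' * Gfun N αt β k' := by
    intro t' ht'
    have hμ2 : (0:ℝ) ≤ 2 * αt * t' := by nlinarith [ht'.1]
    rw [quenchedCav_swap hN hμ1 hμ2 _
      (A := Real.log (Fintype.card (Conf N))) (B := β)
      (fun k b k' l => abs_log_Zcav_le hβ b l) hβ]
    exact tsum_congr fun k' => by rw [Gfun]
  -- representation of the target quenched average
  have hrepH : quenchedCav N αt t (fun _ b _ l =>
        (1 / (N : ℝ)) * ∑ i₀ : Fin N,
          Real.log (1 + Real.tanh β * gibbsCav N β b l (fun σ => (σ i₀ : ℝ))))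
      = ∑' k' : ℕ, poissonPMF (2 * αt * t) k' * Hfun N αt β k' := by
    rw [quenchedCav_swap hN hμ1 hμ2t _ (A := C₂) (B := 0)
      (fun k b k' l => by
        have := Hinner_bound (n := N) hN hβ k k' b l
        rw [hC2def]
        push_cast
        linarith) le_rfl]
    exact tsum_congr fun k' => by rw [Hfun]
  -- the summable majorant for the derivatives
  set r : ℕ → ℝ := fun j => Real.exp (2 * αt) * poissonPMF (2 * αt) j with hrdef
  set u : ℕ → ℝ := fun k' =>
    (2 * αt) * ((if k' = 0 then 0 else r (k' - 1)) + r k') * (A + β * k') with hudef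
  have hsum_r_affine : ∀ A' B' : ℝ, Summable (fun k : ℕ => r k * (A' + B' * k)) := by
    intro A' B'
    have heq : (fun k : ℕ => r k * (A' + B' * k))
        = fun k => Real.exp (2 * αt) * (poissonPMF (2 * αt) k * (A' + B' * k)) := by
      funext k; rw [hrdef]; ring
    rw [heq]
    exact (summable_p_affine hlamnn A' B').mul_left _
  have hsum_r_shift : Summable (fun k' : ℕ =>
      (if k' = 0 then 0 else r (k' - 1)) * (A + β * k')) := by
    apply (summable_nat_add_iff 1).mp
    have heq : (fun m : ℕ => (if m + 1 = 0 then 0 else r (m + 1 - 1)) * (A + β * ((m:ℕ)+1 : ℕ)))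
        = fun m : ℕ => r m * ((A + β) + β * m) := by
      funext m
      simp only [Nat.succ_ne_zero, if_false, Nat.add_sub_cancel]
      push_cast
      ring
    exact heq ▸ hsum_r_affine (A + β) β
  have hu : Summable u := by
    have heq : u = fun k' =>
        (2 * αt) * ((if k' = 0 then 0 else r (k' - 1)) * (A + β * k') + r k' * (A + β * k')) := by
      funext k'; rw [hudef]; ring
    rw [heq]
    exact (hsum_r_shift.add (hsum_r_affine A β)).mul_left _
  -- the termwise derivatives
  set q' : ℕ → ℝ → ℝ := fun k' y =>
    (2 * αt) * ((if k' = 0 then 0 else poissonPMF (2 * αt * y) (k' - 1))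
      - poissonPMF (2 * αt * y) k') * Gfun N αt β k' with hq'def
  have hg : ∀ (k' : ℕ) (y : ℝ), y ∈ Set.Ioo (0:ℝ) 1 →
      HasDerivAt (fun z : ℝ => poissonPMF (2 * αt * z) k' * Gfun N αt β k') (q' k' y) y := by
    intro k' y _
    exact (hasDerivAt_poissonPMF (2 * αt) k' y).mul_const (Gfun N αt β k')
  have hg' : ∀ (k' : ℕ) (y : ℝ), y ∈ Set.Ioo (0:ℝ) 1 → ‖q' k' y‖ ≤ u k' := by
    intro k' y hy
    rw [hq'def, hudef, Real.norm_eq_abs, abs_mul, abs_mul, abs_of_nonneg hlamnn]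
    have hX : |(if k' = 0 then 0 else poissonPMF (2 * αt * y) (k' - 1))
        - poissonPMF (2 * αt * y) k'| ≤ (if k' = 0 then 0 else r (k' - 1)) + r k' := by
      refine (abs_sub _ _).trans ?_
      gcongr
      · rcases Nat.eq_zero_or_pos k' with h0 | h0
        · simp [h0]
        · have hne : k' ≠ 0 := Nat.pos_iff_ne_zero.mp h0
          simp only [hne, if_false]
          rw [abs_of_nonneg (poissonPMF_nonneg (by nlinarith [hy.1] : (0:ℝ) ≤ 2*αt*y) _)]
          rw [hrdef]
          exact poissonPMF_le_of_mem hlamnn hy _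
      · rw [abs_of_nonneg (poissonPMF_nonneg (by nlinarith [hy.1] : (0:ℝ) ≤ 2*αt*y) _)]
        rw [hrdef]
        exact poissonPMF_le_of_mem hlamnn hy _
    have hXnn : (0:ℝ) ≤ (if k' = 0 then 0 else r (k' - 1)) + r k' := le_trans (abs_nonneg _) hX
    have hAk : (0:ℝ) ≤ A + β * k' := by positivity
    calc (2 * αt) * |(if k' = 0 then 0 else poissonPMF (2 * αt * y) (k' - 1))
          - poissonPMF (2 * αt * y) k'| * |Gfun N αt β k'|
        ≤ (2 * αt) * ((if k' = 0 then 0 else r (k' - 1)) + r k') * (A + β * k') := by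
          apply mul_le_mul
          · exact mul_le_mul_of_nonneg_left hX hlamnn
          · exact hgb k'
          · exact abs_nonneg _
          · positivity
      _ = _ := rfl
  have hg0 : Summable (fun k' : ℕ => poissonPMF (2 * αt * t) k' * Gfun N αt β k') := by
    apply summable_of_abs_le_p_affine hμ2t (A := A) (B := β)
    intro k'
    rw [abs_mul, abs_of_nonneg (poissonPMF_nonneg hμ2t k')]
    exact mul_le_mul_of_nonneg_left (hgb k') (poissonPMF_nonneg hμ2t k')
  have hΦ : HasDerivAt (fun z : ℝ => ∑' k' : ℕ, poissonPMF (2 * αt * z) k' * Gfun N αt β k')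
      (∑' k' : ℕ, q' k' t) t :=
    hasDerivAt_tsum_of_isPreconnected hu isOpen_Ioo (convex_Ioo (0:ℝ) 1).isPreconnected
      hg hg' ht hg0 ht
  -- compute the derivative value
  have hsum_qh : Summable (fun k' : ℕ => poissonPMF (2 * αt * t) k' * Hfun N αt β k') := by
    apply summable_of_abs_le_p_affine hμ2t (A := C₂) (B := 0)
    intro k'
    rw [abs_mul, abs_of_nonneg (poissonPMF_nonneg hμ2t k')]
    have := mul_le_mul_of_nonneg_left (hhb k') (poissonPMF_nonneg hμ2t k')
    calc _ ≤ poissonPMF (2*αt*t) k' * C₂ := this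
      _ = poissonPMF (2*αt*t) k' * (C₂ + 0 * k') := by ring
  have hsum_qg1 : Summable (fun m : ℕ => poissonPMF (2 * αt * t) m * Gfun N αt β (m + 1)) := by
    apply summable_of_abs_le_p_affine hμ2t (A := A + β) (B := β)
    intro m
    rw [abs_mul, abs_of_nonneg (poissonPMF_nonneg hμ2t m)]
    have h1 := mul_le_mul_of_nonneg_left (hgb (m+1)) (poissonPMF_nonneg hμ2t m)
    calc _ ≤ poissonPMF (2*αt*t) m * (A + β * ((m:ℕ)+1 : ℕ)) := by
          refine h1.trans_eq ?_
          push_cast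
          ring
      _ = poissonPMF (2*αt*t) m * ((A + β) + β * m) := by push_cast; ring
  set efun : ℕ → ℝ := fun k' =>
    if k' = 0 then 0 else poissonPMF (2 * αt * t) (k' - 1) * Gfun N αt β k' with hedef
  have he : Summable efun := by
    apply (summable_nat_add_iff 1).mp
    refine hsum_qg1.congr fun m => ?_
    rw [hedef]
    simp
  have hval : ∑' k' : ℕ, q' k' t
      = 2 * αt * Real.log (Real.cosh β)
        + 2 * αt * ∑' k' : ℕ, poissonPMF (2 * αt * t) k' * Hfun N αt β k' := by
    have hterm : ∀ k' : ℕ, q' k' t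
        = 2 * αt * (efun k' - poissonPMF (2 * αt * t) k' * Gfun N αt β k') := by
      intro k'
      rw [hq'def, hedef]
      rcases Nat.eq_zero_or_pos k' with h0 | h0
      · simp [h0]
        ring
      · have hne : k' ≠ 0 := Nat.pos_iff_ne_zero.mp h0
        simp only [hne, if_false]
        ring
    rw [tsum_congr hterm, tsum_mul_left, Summable.tsum_sub he hg0]
    have he2 : ∑' k' : ℕ, efun k'
        = ∑' m : ℕ, poissonPMF (2 * αt * t) m * Gfun N αt β (m + 1) := by
      rw [Summable.tsum_eq_zero_add he]
      simp [hedef]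
    have hsucc : ∀ m : ℕ, Gfun N αt β (m + 1)
        = Real.log (Real.cosh β) + Gfun N αt β m + Hfun N αt β m :=
      fun m => Gfun_succ hN hαt hβ m
    have he3 : ∑' m : ℕ, poissonPMF (2 * αt * t) m * Gfun N αt β (m + 1)
        = Real.log (Real.cosh β) + (∑' m : ℕ, poissonPMF (2 * αt * t) m * Gfun N αt β m)
          + ∑' m : ℕ, poissonPMF (2 * αt * t) m * Hfun N αt β m := by
      have hterm2 : ∀ m : ℕ, poissonPMF (2 * αt * t) m * Gfun N αt β (m + 1)
          = (Real.log (Real.cosh β) * poissonPMF (2 * αt * t) m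
              + poissonPMF (2 * αt * t) m * Gfun N αt β m)
            + poissonPMF (2 * αt * t) m * Hfun N αt β m := by
        intro m
        rw [hsucc m]
        ring
      rw [tsum_congr hterm2,
        Summable.tsum_add (((summable_poissonPMF _).mul_left _).add hg0) hsum_qh,
        Summable.tsum_add ((summable_poissonPMF _).mul_left _) hg0,
        tsum_mul_left, tsum_poissonPMF]
      ring
    rw [he2, he3]
    ring
  -- put everything together
  have hPsiEq : (fun t' : ℝ => Psi N αt β t')
      =ᶠ[nhds t] fun t' : ℝ =>
        (∑' k' : ℕ, poissonPMF (2 * αt * t') k' * Gfun N αt β k')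
          - quenched N αt (fun _ b => Real.log (Zdil N β b)) := by
    refine Filter.eventuallyEq_of_mem (isOpen_Ioo.mem_nhds ht) fun t' ht' => ?_
    simp only [Psi]
    rw [hrep t' ht']
  have hfinal : HasDerivAt (fun t' : ℝ => Psi N αt β t') (∑' k' : ℕ, q' k' t) t :=
    (hΦ.sub_const _).congr_of_eventuallyEq hPsiEq
  rw [hval] at hfinal
  rw [hrepH]
  exact hfinal
end

section
/- Fix N ≥ 1, s ≥ 1, α̃ > 0, β ≥ 0, and let F : ({−1,1}^N)^s → ℝ be any function of s replica configurations. Then for every t ∈ (0,1), the quenched replica average ⟨F⟩_t = E_t[Ω_t(F)] is differentiable in t with d⟨F⟩_t/dt = 2α̃ · ( E_t[ (1/N) Σ_{i₀∈Fin N} Ω_t(F·exp(β Σ_{a=1}^s σ_{i₀}^a)) / (ω_t(exp(β σ_{i₀})))^s ] − ⟨F⟩_t ). -/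
open scoped BigOperators

/-- Replica Gibbs expectation `Ω_t = ω_t ⊗ ⋯ ⊗ ω_t` (`s` factors, same realization)
of a function of `s` replica configurations. -/
noncomputable def OmegaCav (n : ℕ) (β : ℝ) (s : ℕ) {k k' : ℕ}
    (b : Fin k → Fin n × Fin n) (l : Fin k' → Fin n)
    (F : (Fin s → Conf n) → ℝ) : ℝ :=
  (∑ σs : Fin s → Conf n, F σs * ∏ a : Fin s, cavWeight n β b l (σs a))
    / (Zcav n β b l) ^ s


/-! ### Auxiliary lemmas -/

instance : Nonempty {x : ℝ // x ∈ SpinVal} := ⟨⟨1, by simp⟩⟩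

lemma poissonPMF_nonneg {lam : ℝ} (h : 0 ≤ lam) (k : ℕ) : 0 ≤ poissonPMF lam k := by
  unfold poissonPMF; positivity

lemma summable_poissonPMF (lam : ℝ) : Summable (fun k => poissonPMF lam k) := by
  have : (fun k => poissonPMF lam k)
      = fun k => Real.exp (-lam) * (lam ^ k / (Nat.factorial k : ℝ)) := by
    funext k; rw [poissonPMF, mul_div_assoc]
  rw [this]
  exact (Real.summable_pow_div_factorial lam).mul_left _

lemma poissonPMF_le {lam x : ℝ} (hlam : 0 ≤ lam) (hx : 0 ≤ x) (hx1 : x ≤ 1) (k : ℕ) :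
    poissonPMF (lam * x) k ≤ lam ^ k / (Nat.factorial k : ℝ) := by
  unfold poissonPMF
  rw [div_le_div_iff_of_pos_right (Nat.cast_pos.mpr (Nat.factorial_pos k))]
  calc Real.exp (-(lam*x)) * (lam*x)^k ≤ 1 * (lam*x)^k := by
        apply mul_le_mul_of_nonneg_right _ (by positivity)
        exact Real.exp_le_one_iff.mpr (by nlinarith)
    _ = (lam*x)^k := one_mul _
    _ ≤ lam ^ k := by
        apply pow_le_pow_left₀ (by positivity)
        nlinarith

lemma hasDerivAt_poissonPMF (lam : ℝ) (k : ℕ) (x : ℝ) :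
    HasDerivAt (fun y => poissonPMF (lam * y) k)
      (lam * (if k = 0 then 0 else poissonPMF (lam * x) (k - 1)) - lam * poissonPMF (lam * x) k)
      x := by
  have hu : HasDerivAt (fun y : ℝ => lam * y) lam x := by
    simpa using (hasDerivAt_id x).const_mul lam
  have hexp : HasDerivAt (fun y => Real.exp (-(lam * y))) (Real.exp (-(lam * x)) * (-lam)) x :=
    hu.neg.exp
  have hpow : HasDerivAt (fun y => (lam * y) ^ k) ((k : ℝ) * (lam * x) ^ (k - 1) * lam) x :=
    hu.pow k
  have h := (hexp.mul hpow).div_const ((Nat.factorial k : ℝ))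
  have hfun : (fun y => Real.exp (-(lam * y)) * (lam * y) ^ k / (Nat.factorial k : ℝ))
      = fun y => poissonPMF (lam * y) k := by
    funext y; rw [poissonPMF]
  simp only [Pi.mul_apply] at h
  rw [hfun] at h
  refine h.congr_deriv ?_; symm
  cases k with
  | zero => simp [poissonPMF]; ring
  | succ m =>
      have hf : ((Nat.factorial (m + 1) : ℝ)) = (m + 1) * (Nat.factorial m : ℝ) := by
        rw [Nat.factorial_succ]; push_cast; ring
      have hm : (Nat.factorial m : ℝ) ≠ 0 := Nat.cast_ne_zero.mpr (Nat.factorial_ne_zero m)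
      simp only [Nat.succ_ne_zero, if_false, poissonPMF, Nat.add_sub_cancel]
      rw [hf]
      field_simp
      push_cast; ring

lemma summable_shifted (lam : ℝ) :
    Summable (fun k : ℕ => if k = 0 then 0 else lam ^ (k-1) / (Nat.factorial (k-1) : ℝ)) := by
  apply (summable_nat_add_iff 1).mp
  simpa using Real.summable_pow_div_factorial lam

lemma hasDerivAt_poisson_series (lam : ℝ) (hlam : 0 < lam) (D : ℕ → ℝ) (M : ℝ)
    (hD : ∀ k, |D k| ≤ M) (t : ℝ) (ht : t ∈ Set.Ioo (0:ℝ) 1) :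
    HasDerivAt (fun x => ∑' k, poissonPMF (lam * x) k * D k)
      (lam * ((∑' k, poissonPMF (lam * t) k * D (k+1)) - ∑' k, poissonPMF (lam * t) k * D k))
      t := by
  have hM : 0 ≤ M := (abs_nonneg _).trans (hD 0)
  set Q : ℕ → ℝ → ℝ := fun k x => if k = 0 then 0 else poissonPMF (lam * x) (k - 1) with hQ
  set QB : ℕ → ℝ := fun k => if k = 0 then 0 else lam ^ (k-1) / (Nat.factorial (k-1) : ℝ) with hQB
  have hQnonneg : ∀ k x, 0 < x → 0 ≤ Q k x := by
    intro k x hx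
    by_cases h : k = 0
    · simp [hQ, h]
    · simp only [hQ, h, if_false]
      exact poissonPMF_nonneg (mul_nonneg hlam.le hx.le) _
  have hQle : ∀ k, ∀ x ∈ Set.Ioo (0:ℝ) 1, Q k x ≤ QB k := by
    intro k x hx
    by_cases h : k = 0
    · simp [hQ, hQB, h]
    · simp only [hQ, hQB, h, if_false]
      exact poissonPMF_le hlam.le hx.1.le hx.2.le _
  have hQBnonneg : ∀ k, 0 ≤ QB k := by
    intro k
    by_cases h : k = 0
    · simp [hQB, h]
    · simp only [hQB, h, if_false]; positivity
  set u : ℕ → ℝ := fun k => (lam * QB k + lam * (lam ^ k / (Nat.factorial k : ℝ))) * M with hu_def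
  have hu : Summable u := by
    apply Summable.mul_right
    exact ((summable_shifted lam).mul_left lam).add
      ((Real.summable_pow_div_factorial lam).mul_left lam)
  set g : ℕ → ℝ → ℝ := fun k x => poissonPMF (lam * x) k * D k with hg_def
  set g' : ℕ → ℝ → ℝ := fun k x =>
    (lam * Q k x - lam * poissonPMF (lam * x) k) * D k with hg'_def
  have hg : ∀ k y, y ∈ Set.Ioo (0:ℝ) 1 → HasDerivAt (g k) (g' k y) y := by
    intro k y _
    exact (hasDerivAt_poissonPMF lam k y).mul_const (D k)
  have hg' : ∀ k y, y ∈ Set.Ioo (0:ℝ) 1 → ‖g' k y‖ ≤ u k := by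
    intro k y hy
    have hQn := hQnonneg k y hy.1
    have hPn := poissonPMF_nonneg (mul_nonneg hlam.le hy.1.le) k
    have h1 : |lam * Q k y - lam * poissonPMF (lam * y) k|
        ≤ lam * QB k + lam * (lam ^ k / (Nat.factorial k : ℝ)) := by
      refine (abs_sub _ _).trans ?_
      rw [abs_of_nonneg (by positivity), abs_of_nonneg (by positivity)]
      gcongr
      · exact hQle k y hy
      · exact poissonPMF_le hlam.le hy.1.le hy.2.le k
    calc ‖g' k y‖ = |lam * Q k y - lam * poissonPMF (lam * y) k| * |D k| := by
          rw [hg'_def]; exact abs_mul _ _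
      _ ≤ (lam * QB k + lam * (lam ^ k / (Nat.factorial k : ℝ))) * M := by
          apply mul_le_mul h1 (hD k) (abs_nonneg _)
          positivity
      _ = u k := rfl
  have hg0 : Summable (fun k => g k t) := by
    apply Summable.of_norm_bounded (g := fun k => (lam ^ k / (Nat.factorial k : ℝ)) * M)
      ((Real.summable_pow_div_factorial lam).mul_right M)
    intro k
    rw [hg_def, norm_mul, Real.norm_eq_abs, Real.norm_eq_abs,
        abs_of_nonneg (poissonPMF_nonneg (mul_nonneg hlam.le ht.1.le) k)]
    exact mul_le_mul (poissonPMF_le hlam.le ht.1.le ht.2.le k) (hD k) (abs_nonneg _)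
      (by positivity)
  have key := hasDerivAt_tsum_of_isPreconnected hu isOpen_Ioo
      (convex_Ioo (0:ℝ) 1).isPreconnected hg hg' ht hg0 ht
  refine key.congr_deriv ?_; symm
  have hsum1 : Summable (fun k => lam * (Q k t * D k)) := by
    apply Summable.of_norm_bounded (g := fun k => lam * QB k * M)
      (((summable_shifted lam).mul_left lam).mul_right M)
    intro k
    rw [norm_mul, norm_mul, Real.norm_eq_abs, Real.norm_eq_abs, Real.norm_eq_abs,
      abs_of_nonneg hlam.le, abs_of_nonneg (hQnonneg k t ht.1), mul_assoc]
    exact mul_le_mul_of_nonneg_left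
      (mul_le_mul (hQle k t ht) (hD k) (abs_nonneg _) (hQBnonneg k)) hlam.le
  have hsum2 : Summable (fun k => lam * (poissonPMF (lam * t) k * D k)) := by
    apply Summable.of_norm_bounded (g := fun k => lam * (lam ^ k / (Nat.factorial k : ℝ)) * M)
      (((Real.summable_pow_div_factorial lam).mul_left lam).mul_right M)
    intro k
    have hPn := poissonPMF_nonneg (mul_nonneg hlam.le ht.1.le) k
    rw [norm_mul, norm_mul, Real.norm_eq_abs, Real.norm_eq_abs, Real.norm_eq_abs,
      abs_of_nonneg hlam.le, abs_of_nonneg hPn, mul_assoc]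
    exact mul_le_mul_of_nonneg_left
      (mul_le_mul (poissonPMF_le hlam.le ht.1.le ht.2.le k) (hD k) (abs_nonneg _)
        (by positivity)) hlam.le
  have hrw : ∀ k, g' k t = lam * (Q k t * D k) - lam * (poissonPMF (lam * t) k * D k) := by
    intro k; rw [hg'_def]; ring
  rw [tsum_congr hrw, Summable.tsum_sub hsum1 hsum2, tsum_mul_left, tsum_mul_left]
  have hshift : ∑' k, Q k t * D k = ∑' k, poissonPMF (lam * t) k * D (k + 1) := by
    have hs : Summable (fun k => Q k t * D k) := by
      have := hsum1.mul_left (lam⁻¹)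
      simpa [← mul_assoc, inv_mul_cancel₀ hlam.ne'] using this
    rw [Summable.tsum_eq_zero_add hs]
    simp [hQ]
  rw [hshift]
  ring

lemma cavWeight_pos (n : ℕ) (β : ℝ) {k k' : ℕ} (b : Fin k → Fin n × Fin n)
    (l : Fin k' → Fin n) (σ : Conf n) : 0 < cavWeight n β b l σ := Real.exp_pos _

lemma Zcav_pos (n : ℕ) (β : ℝ) {k k' : ℕ} (b : Fin k → Fin n × Fin n)
    (l : Fin k' → Fin n) : 0 < Zcav n β b l := by
  apply Finset.sum_pos (fun σ _ => Real.exp_pos _) Finset.univ_nonempty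

lemma cavWeight_cons (n : ℕ) (β : ℝ) {k k' : ℕ} (b : Fin k → Fin n × Fin n)
    (l : Fin k' → Fin n) (i₀ : Fin n) (σ : Conf n) :
    cavWeight n β b (Fin.cons i₀ l) σ = cavWeight n β b l σ * Real.exp (β * (σ i₀ : ℝ)) := by
  unfold cavWeight
  rw [← Real.exp_add, Fin.sum_univ_succ]
  simp only [Fin.cons_zero, Fin.cons_succ]
  ring_nf

lemma gibbsCav_exp_pos (n : ℕ) (β : ℝ) {k k' : ℕ} (b : Fin k → Fin n × Fin n)
    (l : Fin k' → Fin n) (i₀ : Fin n) :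
    0 < gibbsCav n β b l (fun σ => Real.exp (β * (σ i₀ : ℝ))) := by
  apply div_pos _ (Zcav_pos n β b l)
  apply Finset.sum_pos (fun σ _ => mul_pos (Real.exp_pos _) (Real.exp_pos _))
    Finset.univ_nonempty

lemma Zcav_cons (n : ℕ) (β : ℝ) {k k' : ℕ} (b : Fin k → Fin n × Fin n)
    (l : Fin k' → Fin n) (i₀ : Fin n) :
    Zcav n β b (Fin.cons i₀ l) =
      gibbsCav n β b l (fun σ => Real.exp (β * (σ i₀ : ℝ))) * Zcav n β b l := by
  rw [gibbsCav, div_mul_cancel₀ _ (Zcav_pos n β b l).ne']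
  unfold Zcav
  exact Finset.sum_congr rfl fun σ _ => by rw [cavWeight_cons]; ring

lemma OmegaCav_cons (n : ℕ) (β : ℝ) (s : ℕ) {k k' : ℕ} (b : Fin k → Fin n × Fin n)
    (l : Fin k' → Fin n) (i₀ : Fin n) (F : (Fin s → Conf n) → ℝ) :
    OmegaCav n β s b (Fin.cons i₀ l) F =
      OmegaCav n β s b l (fun σs => F σs * Real.exp (β * ∑ a : Fin s, (σs a i₀ : ℝ)))
        / (gibbsCav n β b l (fun σ => Real.exp (β * (σ i₀ : ℝ)))) ^ s := by
  have hZ := (Zcav_pos n β b l).ne'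
  have hg := (gibbsCav_exp_pos n β b l i₀).ne'
  unfold OmegaCav
  rw [Zcav_cons]
  have hnum : ∀ σs : Fin s → Conf n,
      F σs * ∏ a : Fin s, cavWeight n β b (Fin.cons i₀ l) (σs a)
      = (F σs * Real.exp (β * ∑ a : Fin s, (σs a i₀ : ℝ))) *
          ∏ a : Fin s, cavWeight n β b l (σs a) := by
    intro σs
    simp only [cavWeight_cons, Finset.prod_mul_distrib, ← Real.exp_sum, Finset.mul_sum]
    ring
  rw [Finset.sum_congr rfl (fun σs _ => hnum σs), mul_pow]
  field_simp

lemma abs_OmegaCav_le (n : ℕ) (β : ℝ) (s : ℕ) {k k' : ℕ} (b : Fin k → Fin n × Fin n)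
    (l : Fin k' → Fin n) (F : (Fin s → Conf n) → ℝ) :
    |OmegaCav n β s b l F| ≤ ∑ σs : Fin s → Conf n, |F σs| := by
  have hZ := Zcav_pos n β b l
  have hZs : (0:ℝ) < (Zcav n β b l) ^ s := pow_pos hZ s
  rw [OmegaCav, abs_div, abs_of_pos hZs, div_le_iff₀ hZs]
  have hwle : ∀ σ : Conf n, cavWeight n β b l σ ≤ Zcav n β b l := fun σ =>
    Finset.single_le_sum (f := fun σ' => cavWeight n β b l σ')
      (fun σ' _ => (cavWeight_pos n β b l σ').le) (Finset.mem_univ σ)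
  have hprod : ∀ σs : Fin s → Conf n,
      ∏ a : Fin s, cavWeight n β b l (σs a) ≤ (Zcav n β b l) ^ s := by
    intro σs
    calc ∏ a : Fin s, cavWeight n β b l (σs a)
        ≤ ∏ _a : Fin s, Zcav n β b l :=
          Finset.prod_le_prod (fun a _ => (cavWeight_pos n β b l _).le) (fun a _ => hwle _)
      _ = (Zcav n β b l) ^ s := by simp
  calc |∑ σs : Fin s → Conf n, F σs * ∏ a : Fin s, cavWeight n β b l (σs a)|
      ≤ ∑ σs : Fin s → Conf n, |F σs * ∏ a : Fin s, cavWeight n β b l (σs a)| :=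
        Finset.abs_sum_le_sum_abs _ _
    _ ≤ ∑ σs : Fin s → Conf n, |F σs| * (Zcav n β b l) ^ s := by
        apply Finset.sum_le_sum
        intro σs _
        rw [abs_mul,
          abs_of_nonneg (Finset.prod_nonneg fun a _ => (cavWeight_pos n β b l _).le)]
        exact mul_le_mul_of_nonneg_left (hprod σs) (abs_nonneg _)
    _ = (∑ σs : Fin s → Conf n, |F σs|) * (Zcav n β b l) ^ s := by
        rw [Finset.sum_mul]

lemma sum_cons_eq {n k' : ℕ} (G : (Fin (k' + 1) → Fin n) → ℝ) :
    ∑ l' : Fin (k' + 1) → Fin n, G l'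
      = ∑ i₀ : Fin n, ∑ l : Fin k' → Fin n, G (Fin.cons i₀ l) := by
  rw [← (Fin.consEquiv (fun _ => Fin n)).sum_comp G, Fintype.sum_prod_type]
  rfl

lemma tsum_swap_poisson (c p : ℕ → ℝ) (hc : Summable c) (hp : Summable p)
    (hc0 : ∀ k, 0 ≤ c k) (hp0 : ∀ j, 0 ≤ p j) (R : ℕ → ℕ → ℝ) (M : ℝ)
    (hR : ∀ k j, |R k j| ≤ M) :
    ∑' k, ∑' j, c k * p j * R k j = ∑' j, p j * ∑' k, c k * R k j := by
  have hM : 0 ≤ M := (abs_nonneg _).trans (hR 0 0)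
  have hsum : Summable (Function.uncurry (fun k j => c k * p j * R k j)) := by
    apply Summable.of_norm_bounded (g := fun z : ℕ × ℕ => c z.1 * (p z.2 * M))
      (hc.mul_of_nonneg (hp.mul_right M) hc0 (fun j => mul_nonneg (hp0 j) hM))
    rintro ⟨k, j⟩
    simp only [Function.uncurry]
    rw [norm_mul, norm_mul, Real.norm_eq_abs, Real.norm_eq_abs, Real.norm_eq_abs,
      abs_of_nonneg (hc0 k), abs_of_nonneg (hp0 j), mul_assoc]
    exact mul_le_mul_of_nonneg_left (mul_le_mul_of_nonneg_left (hR k j) (hp0 j)) (hc0 k)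
  have h₁ : ∀ k, Summable (fun j => c k * p j * R k j) := fun k => hsum.prod_factor k
  have h₂ : ∀ j, Summable (fun k => c k * p j * R k j) := fun j =>
    hsum.prod_symm.prod_factor j
  have hcomm := Summable.tsum_comm' (f := fun k j => c k * p j * R k j) hsum h₁ h₂
  rw [← hcomm]
  refine tsum_congr fun j => ?_
  rw [← tsum_mul_left]
  exact tsum_congr fun k => by ring

/-- **Streaming equation for quenched replica observables (exact, un-expanded form).**
For any function `F` of `s` replica configurations and `t ∈ (0,1)`, the quenched replica
average `⟨F⟩_t = E_t[Ω_t(F)]` is differentiable in `t`, with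
`d⟨F⟩_t/dt = 2α̃·(E_t[(1/N) Σ_{i₀} Ω_t(F·exp(β Σ_a σ_{i₀}^a))/(ω_t(exp(β σ_{i₀})))^s] − ⟨F⟩_t)`. -/
theorem streaming_equation (N : ℕ) (hN : 1 ≤ N) (s : ℕ) (hs : 1 ≤ s)
    (αt β : ℝ) (hαt : 0 < αt) (hβ : 0 ≤ β)
    (F : (Fin s → Conf N) → ℝ) (t : ℝ) (ht : t ∈ Set.Ioo (0 : ℝ) 1) :
    HasDerivAt (fun t' : ℝ =>
        quenchedCav N αt t' (fun _ b _ l => OmegaCav N β s b l F))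
      (2 * αt *
        (quenchedCav N αt t (fun _ b _ l =>
            (1 / (N : ℝ)) * ∑ i₀ : Fin N,
              OmegaCav N β s b l
                  (fun σs => F σs * Real.exp (β * ∑ a : Fin s, (σs a i₀ : ℝ)))
                / (gibbsCav N β b l (fun σ => Real.exp (β * (σ i₀ : ℝ)))) ^ s)
          - quenchedCav N αt t (fun _ b _ l => OmegaCav N β s b l F)))
      t := by
  obtain ⟨ht0, ht1⟩ := ht
  have hN0 : (0:ℝ) < (N:ℝ) := by exact_mod_cast hN
  set M : ℝ := ∑ σs : Fin s → Conf N, |F σs| with hM_def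
  have hM0 : 0 ≤ M := Finset.sum_nonneg fun _ _ => abs_nonneg _
  set c : ℕ → ℝ := fun k => poissonPMF (αt * N) k with hc_def
  have hc : Summable c := summable_poissonPMF _
  have hc0 : ∀ k, 0 ≤ c k := fun k =>
    poissonPMF_nonneg (mul_nonneg hαt.le (Nat.cast_nonneg N)) k
  set R : ℕ → ℕ → ℝ := fun k j =>
    (∑ b : Fin k → Fin N × Fin N, ∑ l : Fin j → Fin N, OmegaCav N β s b l F)
      / (((N:ℝ) ^ 2) ^ k * (N:ℝ) ^ j) with hR_def
  have hRle : ∀ k j, |R k j| ≤ M := by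
    intro k j
    have hd : (0:ℝ) < ((N:ℝ)^2)^k * (N:ℝ)^j := by positivity
    rw [hR_def]
    simp only
    rw [abs_div, abs_of_pos hd, div_le_iff₀ hd]
    have h1 : ∀ b : Fin k → Fin N × Fin N,
        |∑ l : Fin j → Fin N, OmegaCav N β s b l F| ≤ (N:ℝ)^j * M := by
      intro b
      refine (Finset.abs_sum_le_sum_abs _ _).trans ?_
      refine (Finset.sum_le_sum fun l _ => abs_OmegaCav_le N β s b l F).trans ?_
      rw [Finset.sum_const, Finset.card_univ, nsmul_eq_mul]
      have hcard : (Fintype.card (Fin j → Fin N) : ℝ) = (N:ℝ)^j := by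
        rw [Fintype.card_fun]; push_cast; simp
      rw [hcard, ← hM_def]
    calc |∑ b : Fin k → Fin N × Fin N, ∑ l : Fin j → Fin N, OmegaCav N β s b l F|
        ≤ ∑ b : Fin k → Fin N × Fin N, |∑ l : Fin j → Fin N, OmegaCav N β s b l F| :=
          Finset.abs_sum_le_sum_abs _ _
      _ ≤ ∑ _b : Fin k → Fin N × Fin N, (N:ℝ)^j * M :=
          Finset.sum_le_sum fun b _ => h1 b
      _ = (Fintype.card (Fin k → Fin N × Fin N) : ℝ) * ((N:ℝ)^j * M) := by
          rw [Finset.sum_const, Finset.card_univ, nsmul_eq_mul]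
      _ = M * (((N:ℝ)^2)^k * (N:ℝ)^j) := by
          simp only [Fintype.card_fun, Fintype.card_prod, Fintype.card_fin]
          push_cast
          ring
  set D : ℕ → ℝ := fun j => ∑' k, c k * R k j with hD_def
  set MC : ℝ := (∑' k, c k) * M with hMC_def
  have hDle : ∀ j, |D j| ≤ MC := by
    intro j
    rw [hD_def, hMC_def]
    simp only
    rw [← tsum_mul_right]
    have := tsum_of_norm_bounded (f := fun k => c k * R k j) ((hc.mul_right M).hasSum)
      (fun k => by
        rw [norm_mul, Real.norm_eq_abs, Real.norm_eq_abs, abs_of_nonneg (hc0 k)]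
        exact mul_le_mul_of_nonneg_left (hRle k j) (hc0 k))
    simpa using this
  have hfun : ∀ x : ℝ, 0 < x →
      quenchedCav N αt x (fun _ b _ l => OmegaCav N β s b l F)
        = ∑' j, poissonPMF (2 * αt * x) j * D j := by
    intro x hx
    have hswap := tsum_swap_poisson c (fun j => poissonPMF (2 * αt * x) j) hc
      (summable_poissonPMF _) hc0
      (fun j => poissonPMF_nonneg (by positivity) j) R M hRle
    exact hswap
  have hT1 : quenchedCav N αt t (fun _ b _ l =>
        (1 / (N : ℝ)) * ∑ i₀ : Fin N,
          OmegaCav N β s b l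
              (fun σs => F σs * Real.exp (β * ∑ a : Fin s, (σs a i₀ : ℝ)))
            / (gibbsCav N β b l (fun σ => Real.exp (β * (σ i₀ : ℝ)))) ^ s)
      = ∑' j, poissonPMF (2 * αt * t) j * D (j + 1) := by
    have hpt : ∀ (k : ℕ) (b : Fin k → Fin N × Fin N) (j : ℕ) (l : Fin j → Fin N),
        (1 / (N : ℝ)) * ∑ i₀ : Fin N,
            OmegaCav N β s b l
                (fun σs => F σs * Real.exp (β * ∑ a : Fin s, (σs a i₀ : ℝ)))
              / (gibbsCav N β b l (fun σ => Real.exp (β * (σ i₀ : ℝ)))) ^ s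
          = (1 / (N : ℝ)) * ∑ i₀ : Fin N, OmegaCav N β s b (Fin.cons i₀ l) F := by
      intro k b j l
      congr 1
      exact Finset.sum_congr rfl fun i₀ _ => (OmegaCav_cons N β s b l i₀ F).symm
    have hconv : ∀ (k j : ℕ),
        (∑ b : Fin k → Fin N × Fin N, ∑ l : Fin j → Fin N,
            (1 / (N : ℝ)) * ∑ i₀ : Fin N, OmegaCav N β s b (Fin.cons i₀ l) F)
          / (((N:ℝ) ^ 2) ^ k * (N:ℝ) ^ j)
        = R k (j + 1) := by
      intro k j
      have hnum : ∀ b : Fin k → Fin N × Fin N,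
          ∑ l : Fin j → Fin N, (1 / (N : ℝ)) * ∑ i₀ : Fin N, OmegaCav N β s b (Fin.cons i₀ l) F
          = (1 / (N : ℝ)) * ∑ l' : Fin (j+1) → Fin N, OmegaCav N β s b l' F := by
        intro b
        rw [← Finset.mul_sum, sum_cons_eq (fun l' => OmegaCav N β s b l' F),
          Finset.sum_comm]
      rw [Finset.sum_congr rfl (fun b _ => hnum b), ← Finset.mul_sum, hR_def]
      simp only
      rw [pow_succ]
      field_simp
      ring
    calc quenchedCav N αt t (fun _ b _ l =>
          (1 / (N : ℝ)) * ∑ i₀ : Fin N,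
            OmegaCav N β s b l
                (fun σs => F σs * Real.exp (β * ∑ a : Fin s, (σs a i₀ : ℝ)))
              / (gibbsCav N β b l (fun σ => Real.exp (β * (σ i₀ : ℝ)))) ^ s)
        = ∑' k, ∑' j, c k * poissonPMF (2 * αt * t) j * R k (j + 1) := by
          rw [quenchedCav]
          refine tsum_congr fun k => tsum_congr fun j => ?_
          have hin : (∑ b : Fin k → Fin N × Fin N, ∑ l : Fin j → Fin N,
              (1 / (N : ℝ)) * ∑ i₀ : Fin N,
                OmegaCav N β s b l
                    (fun σs => F σs * Real.exp (β * ∑ a : Fin s, (σs a i₀ : ℝ)))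
                  / (gibbsCav N β b l (fun σ => Real.exp (β * (σ i₀ : ℝ)))) ^ s)
              / (((N:ℝ) ^ 2) ^ k * (N:ℝ) ^ j) = R k (j + 1) := by
            rw [Finset.sum_congr rfl (fun b _ => Finset.sum_congr rfl
              (fun l _ => hpt k b j l))]
            exact hconv k j
          rw [hin]
      _ = ∑' j, poissonPMF (2 * αt * t) j * D (j + 1) := by
          have hswap := tsum_swap_poisson c (fun j => poissonPMF (2 * αt * t) j) hc
            (summable_poissonPMF _) hc0
            (fun j => poissonPMF_nonneg (by positivity) j)
            (fun k j => R k (j + 1)) M (fun k j => hRle k (j + 1))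
          exact hswap
  have key := hasDerivAt_poisson_series (2 * αt) (by linarith) D MC hDle t ⟨ht0, ht1⟩
  have heq : (fun t' : ℝ => quenchedCav N αt t' (fun _ b _ l => OmegaCav N β s b l F))
      =ᶠ[nhds t] (fun x => ∑' k, poissonPMF (2 * αt * x) k * D k) := by
    filter_upwards [Ioi_mem_nhds ht0] with x hx
    exact hfun x hx
  have key2 := key.congr_of_eventuallyEq heq
  rw [hT1, hfun t ht0]
  exact key2
end
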